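/- Let P = (C, w, ≁) be a polymer model with finite partition function Z and Gibbs distribution μ, let {Λ_i}_{i∈[m]} be a polymer clique cover of size m, and let P be the clique dynamics transition matrix on F. Then: (a) all entries of P are nonnegative, every row sums to 1, and P(Γ, Γ) > 0 for every Γ ∈ F; (b) detailed balance holds: μ(Γ)·P(Γ, Γ') = μ(Γ')·P(Γ', Γ) for all Γ, Γ' ∈ F; and (c) μ is a stationary distribution of P: ∑_{Γ∈F} μ(Γ)·P(Γ, Γ') = μ(Γ') for all Γ' ∈ F. -/

import Mathlib

open scoped ENNReal Classical

/-- An abstract polymer model: a set `C` of polymers with positive real weights and a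
reflexive, symmetric incompatibility relation. -/
structure PolymerModel (C : Type*) where
  w : C → ℝ
  w_pos : ∀ γ, 0 < w γ
  incomp : C → C → Prop
  incomp_refl : ∀ γ, incomp γ γ
  incomp_symm : ∀ γ γ', incomp γ γ' → incomp γ' γ

namespace PolymerModel

variable {C : Type*}

/-- A polymer family: a finite set of pairwise compatible polymers. -/
def IsFamily (P : PolymerModel C) (Γ : Finset C) : Prop :=
  ∀ γ ∈ Γ, ∀ γ' ∈ Γ, γ ≠ γ' → ¬P.incomp γ γ'

/-- A polymer clique: a set of pairwise incompatible polymers. -/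
def IsClique (P : PolymerModel C) (Λ : Set C) : Prop :=
  ∀ γ ∈ Λ, ∀ γ' ∈ Λ, P.incomp γ γ'

/-- The partition function restricted to `B`:
`Z_B = ∑_{Γ ∈ F_B} ∏_{γ ∈ Γ} w_γ` (valued in `ℝ≥0∞`). -/
noncomputable def Z (P : PolymerModel C) (B : Set C) : ℝ≥0∞ :=
  ∑' Γ : {Γ : Finset C // P.IsFamily Γ ∧ ↑Γ ⊆ B}, ∏ γ ∈ Γ.1, ENNReal.ofReal (P.w γ)

/-- The Gibbs distribution restricted to `B`, regarded as a distribution on all finite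
sets of polymers (assigning `0` outside `F_B`). -/
noncomputable def gibbs (P : PolymerModel C) (B : Set C) (Γ : Finset C) : ℝ≥0∞ :=
  if P.IsFamily Γ ∧ ↑Γ ⊆ B then (∏ γ ∈ Γ, ENNReal.ofReal (P.w γ)) / P.Z B else 0

/-- The clique dynamics condition for a function `f : C → ℝ_{>0}`:
for all `γ`, `∑_{γ' ≁ γ, γ' ≠ γ} f(γ') w_{γ'}/(1 + w_{γ'}) ≤ f(γ)`. -/
def CliqueDynamicsCondition (P : PolymerModel C) (f : C → ℝ) : Prop :=
  ∀ γ : C,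
    ∑' γ' : {γ' : C // P.incomp γ' γ ∧ γ' ≠ γ},
        ENNReal.ofReal (f γ' * P.w γ' / (1 + P.w γ')) ≤ ENNReal.ofReal (f γ)

/-- Total variation distance between two distributions on finite sets of polymers. -/
noncomputable def dTV (μ ν : Finset C → ℝ≥0∞) : ℝ≥0∞ :=
  (∑' Γ : Finset C, ((μ Γ - ν Γ) + (ν Γ - μ Γ))) / 2

end PolymerModel

namespace PolymerModel

variable {C : Type*}

/-- `z_γ = ∑_{i : γ ∈ Λ_i} 1/Z_{Λ_i}`. -/
noncomputable def zClique (P : PolymerModel C) {m : ℕ} (Λ : Fin m → Set C) (γ : C) : ℝ :=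
  ∑ i : Fin m, if γ ∈ Λ i then ((P.Z (Λ i)).toReal)⁻¹ else 0

/-- The off-diagonal entries of the clique dynamics transition matrix:
`P(Γ, Γ ∪ {γ}) = w_γ z_γ/m` for `γ ∉ Γ` with `Γ ∪ {γ} ∈ F`, and
`P(Γ, Γ ∖ {γ}) = z_γ/m` for `γ ∈ Γ`; all other off-diagonal entries vanish. -/
noncomputable def transOff (P : PolymerModel C) {m : ℕ} (Λ : Fin m → Set C)
    (Γ Γ' : Finset C) : ℝ :=
  (∑' γ : C,
      if γ ∉ Γ ∧ Γ' = insert γ Γ ∧ P.IsFamily (insert γ Γ) then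
        P.w γ * P.zClique Λ γ / m
      else 0)
    + ∑' γ : C, if γ ∈ Γ ∧ Γ' = Γ.erase γ then P.zClique Λ γ / m else 0

/-- The clique dynamics transition matrix on the polymer families: off-diagonal entries
given by `transOff`, diagonal entries `P(Γ, Γ) = 1 − ∑_{Γ' ∈ F, Γ' ≠ Γ} P(Γ, Γ')`. -/
noncomputable def trans (P : PolymerModel C) {m : ℕ} (Λ : Fin m → Set C)
    (Γ Γ' : Finset C) : ℝ :=
  if Γ' = Γ then
    1 - ∑' Γ'' : {Γ'' : Finset C // P.IsFamily Γ'' ∧ Γ'' ≠ Γ}, P.transOff Λ Γ ↑Γ''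
  else P.transOff Λ Γ Γ'

end PolymerModel


namespace PolymerModel

set_option maxHeartbeats 1000000

variable {C : Type*} (P : PolymerModel C)

lemma isFamily_subset {Γ s : Finset C} (h : P.IsFamily Γ) (hs : s ⊆ Γ) : P.IsFamily s :=
  fun γ hγ γ' hγ' hne => h γ (hs hγ) γ' (hs hγ') hne

lemma isFamily_empty : P.IsFamily (∅ : Finset C) := by
  intro γ hγ; simp at hγ

lemma isFamily_singleton (γ : C) : P.IsFamily {γ} := by
  intro a ha b hb hne
  rw [Finset.mem_singleton] at ha hb
  exact absurd (ha.trans hb.symm) hne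

lemma one_le_Z (B : Set C) : 1 ≤ P.Z B := by
  have h := ENNReal.le_tsum
    (f := fun Γ : {Γ : Finset C // P.IsFamily Γ ∧ ↑Γ ⊆ B} =>
      ∏ γ ∈ Γ.1, ENNReal.ofReal (P.w γ))
    ⟨∅, P.isFamily_empty, by simp⟩
  simpa [Z] using h

lemma zClique_nonneg {m : ℕ} (Λ : Fin m → Set C) (γ : C) : 0 ≤ P.zClique Λ γ := by
  refine Finset.sum_nonneg fun i _ => ?_
  split_ifs
  · exact inv_nonneg.2 ENNReal.toReal_nonneg
  · exact le_rfl

variable {m : ℕ} (Λ : Fin m → Set C)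

lemma transOff_nonneg (Γ Γ' : Finset C) : 0 ≤ P.transOff Λ Γ Γ' := by
  refine add_nonneg (tsum_nonneg fun γ => ?_) (tsum_nonneg fun γ => ?_)
  · split_ifs
    · exact div_nonneg (mul_nonneg (P.w_pos γ).le (P.zClique_nonneg Λ γ)) (Nat.cast_nonneg m)
    · exact le_rfl
  · split_ifs
    · exact div_nonneg (P.zClique_nonneg Λ γ) (Nat.cast_nonneg m)
    · exact le_rfl

lemma transOff_insert {Γ : Finset C} {γ₀ : C} (h : γ₀ ∉ Γ)
    (hfam : P.IsFamily (insert γ₀ Γ)) :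
    P.transOff Λ Γ (insert γ₀ Γ) = P.w γ₀ * P.zClique Λ γ₀ / m := by
  rw [transOff]
  have h1 : (∑' γ : C, if γ ∉ Γ ∧ insert γ₀ Γ = insert γ Γ ∧ P.IsFamily (insert γ Γ) then
      P.w γ * P.zClique Λ γ / m else 0) = P.w γ₀ * P.zClique Λ γ₀ / m := by
    have hz : ∀ γ : C, γ ≠ γ₀ →
        (if γ ∉ Γ ∧ insert γ₀ Γ = insert γ Γ ∧ P.IsFamily (insert γ Γ) then
          P.w γ * P.zClique Λ γ / m else 0) = 0 := by
      intro γ hγ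
      rw [if_neg]
      rintro ⟨hγΓ, he, -⟩
      have hm0 : γ₀ ∈ insert γ Γ := he ▸ Finset.mem_insert_self γ₀ Γ
      rcases Finset.mem_insert.1 hm0 with h' | h'
      · exact hγ h'.symm
      · exact h h'
    rw [tsum_eq_single γ₀ hz, if_pos ⟨h, rfl, hfam⟩]
  have h2 : (∑' γ : C, if γ ∈ Γ ∧ insert γ₀ Γ = Γ.erase γ then P.zClique Λ γ / m else 0)
      = 0 := by
    have hz : ∀ γ : C, (if γ ∈ Γ ∧ insert γ₀ Γ = Γ.erase γ then P.zClique Λ γ / m else 0)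
        = 0 := by
      intro γ
      rw [if_neg]
      rintro ⟨hγ, he⟩
      have hm0 : γ₀ ∈ Γ.erase γ := he ▸ Finset.mem_insert_self γ₀ Γ
      exact h (Finset.mem_of_mem_erase hm0)
    rw [tsum_congr hz, tsum_zero]
  rw [h1, h2, add_zero]

lemma transOff_insert_notFam {Γ : Finset C} {γ₀ : C} (h : γ₀ ∉ Γ)
    (hfam : ¬P.IsFamily (insert γ₀ Γ)) :
    P.transOff Λ Γ (insert γ₀ Γ) = 0 := by
  rw [transOff]
  have h1 : (∑' γ : C, if γ ∉ Γ ∧ insert γ₀ Γ = insert γ Γ ∧ P.IsFamily (insert γ Γ) then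
      P.w γ * P.zClique Λ γ / m else 0) = 0 := by
    have hz : ∀ γ : C, (if γ ∉ Γ ∧ insert γ₀ Γ = insert γ Γ ∧ P.IsFamily (insert γ Γ) then
        P.w γ * P.zClique Λ γ / m else 0) = 0 := by
      intro γ
      rw [if_neg]
      rintro ⟨hγΓ, he, hf⟩
      have hm0 : γ₀ ∈ insert γ Γ := he ▸ Finset.mem_insert_self γ₀ Γ
      rcases Finset.mem_insert.1 hm0 with h' | h'
      · exact hfam (h' ▸ he ▸ hf)
      · exact h h'
    rw [tsum_congr hz, tsum_zero]
  have h2 : (∑' γ : C, if γ ∈ Γ ∧ insert γ₀ Γ = Γ.erase γ then P.zClique Λ γ / m else 0)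
      = 0 := by
    have hz : ∀ γ : C, (if γ ∈ Γ ∧ insert γ₀ Γ = Γ.erase γ then P.zClique Λ γ / m else 0)
        = 0 := by
      intro γ
      rw [if_neg]
      rintro ⟨hγ, he⟩
      have hm0 : γ₀ ∈ Γ.erase γ := he ▸ Finset.mem_insert_self γ₀ Γ
      exact h (Finset.mem_of_mem_erase hm0)
    rw [tsum_congr hz, tsum_zero]
  rw [h1, h2, add_zero]

lemma transOff_erase {Γ : Finset C} {γ₀ : C} (h : γ₀ ∈ Γ) :
    P.transOff Λ Γ (Γ.erase γ₀) = P.zClique Λ γ₀ / m := by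
  rw [transOff]
  have h1 : (∑' γ : C, if γ ∉ Γ ∧ Γ.erase γ₀ = insert γ Γ ∧ P.IsFamily (insert γ Γ) then
      P.w γ * P.zClique Λ γ / m else 0) = 0 := by
    have hz : ∀ γ : C, (if γ ∉ Γ ∧ Γ.erase γ₀ = insert γ Γ ∧ P.IsFamily (insert γ Γ) then
        P.w γ * P.zClique Λ γ / m else 0) = 0 := by
      intro γ
      rw [if_neg]
      rintro ⟨hγΓ, he, -⟩
      have hm0 : γ ∈ Γ.erase γ₀ := he ▸ Finset.mem_insert_self γ Γ
      exact hγΓ (Finset.mem_of_mem_erase hm0)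
    rw [tsum_congr hz, tsum_zero]
  have h2 : (∑' γ : C, if γ ∈ Γ ∧ Γ.erase γ₀ = Γ.erase γ then P.zClique Λ γ / m else 0)
      = P.zClique Λ γ₀ / m := by
    have hz : ∀ γ : C, γ ≠ γ₀ →
        (if γ ∈ Γ ∧ Γ.erase γ₀ = Γ.erase γ then P.zClique Λ γ / m else 0) = 0 := by
      intro γ hγ
      rw [if_neg]
      rintro ⟨hγΓ, he⟩
      have hm0 : γ₀ ∈ Γ.erase γ := Finset.mem_erase.2 ⟨fun hc => hγ hc.symm, h⟩
      rw [← he] at hm0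
      exact (Finset.notMem_erase γ₀ Γ) hm0
    rw [tsum_eq_single γ₀ hz, if_pos ⟨h, rfl⟩]
  rw [h1, h2, zero_add]

lemma transOff_eq_zero {Γ Γ' : Finset C}
    (h1 : ∀ γ : C, ¬(γ ∉ Γ ∧ Γ' = insert γ Γ))
    (h2 : ∀ γ : C, ¬(γ ∈ Γ ∧ Γ' = Γ.erase γ)) :
    P.transOff Λ Γ Γ' = 0 := by
  rw [transOff]
  have hz1 : ∀ γ : C, (if γ ∉ Γ ∧ Γ' = insert γ Γ ∧ P.IsFamily (insert γ Γ) then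
      P.w γ * P.zClique Λ γ / m else 0) = 0 := by
    intro γ
    rw [if_neg]
    rintro ⟨ha, hb, -⟩
    exact h1 γ ⟨ha, hb⟩
  have hz2 : ∀ γ : C, (if γ ∈ Γ ∧ Γ' = Γ.erase γ then P.zClique Λ γ / m else 0) = 0 := by
    intro γ
    rw [if_neg]
    exact h2 γ
  rw [tsum_congr hz1, tsum_congr hz2, tsum_zero, add_zero]

/-- The weight factor contributed by `γ` when toggling it in `Γ`. -/
noncomputable def cfun (Γ : Finset C) (γ : C) : ℝ :=
  if γ ∉ Γ ∧ P.IsFamily (insert γ Γ) then P.w γ else if γ ∈ Γ then 1 else 0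

lemma cfun_nonneg (Γ : Finset C) (γ : C) : 0 ≤ P.cfun Γ γ := by
  rw [cfun]
  split_ifs
  · exact (P.w_pos γ).le
  · exact zero_le_one
  · exact le_rfl

/-- The contribution of polymer `γ` to the total transition probability out of `Γ`. -/
noncomputable def kfun (Γ : Finset C) (γ : C) : ℝ :=
  if γ ∉ Γ ∧ P.IsFamily (insert γ Γ) then P.w γ * P.zClique Λ γ / m
  else if γ ∈ Γ then P.zClique Λ γ / m else 0

lemma kfun_nonneg (Γ : Finset C) (γ : C) : 0 ≤ P.kfun Λ Γ γ := by
  rw [kfun]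
  split_ifs
  · exact div_nonneg (mul_nonneg (P.w_pos γ).le (P.zClique_nonneg Λ γ)) (Nat.cast_nonneg m)
  · exact div_nonneg (P.zClique_nonneg Λ γ) (Nat.cast_nonneg m)
  · exact le_rfl

lemma kfun_eq_cfun (Γ : Finset C) (γ : C) :
    P.kfun Λ Γ γ = P.cfun Γ γ * P.zClique Λ γ / m := by
  rw [kfun, cfun]
  split_ifs
  · rfl
  · rw [one_mul]
  · rw [zero_mul, zero_div]

/-- The candidate neighbour of `Γ` obtained by toggling `γ`. -/
noncomputable def jmap (Γ : Finset C) (γ : C) : Finset C :=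
  if γ ∈ Γ then Γ.erase γ else insert γ Γ

lemma jmap_injective (Γ : Finset C) : Function.Injective (jmap (C := C) Γ) := by
  intro a b h
  rw [jmap, jmap] at h
  by_cases ha : a ∈ Γ <;> by_cases hb : b ∈ Γ
  · rw [if_pos ha, if_pos hb] at h
    by_contra hne
    have hmem : a ∈ Γ.erase b := Finset.mem_erase.2 ⟨hne, ha⟩
    rw [← h] at hmem
    exact (Finset.notMem_erase a Γ) hmem
  · rw [if_pos ha, if_neg hb] at h
    have hb' : b ∈ Γ.erase a := by rw [h]; exact Finset.mem_insert_self b Γ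
    exact (hb (Finset.mem_of_mem_erase hb')).elim
  · rw [if_neg ha, if_pos hb] at h
    have ha' : a ∈ Γ.erase b := by rw [← h]; exact Finset.mem_insert_self a Γ
    exact (ha (Finset.mem_of_mem_erase ha')).elim
  · rw [if_neg ha, if_neg hb] at h
    have hmem : a ∈ insert b Γ := by rw [← h]; exact Finset.mem_insert_self a Γ
    rcases Finset.mem_insert.1 hmem with h' | h'
    · exact h'
    · exact absurd h' ha

lemma kfun_spec {Γ : Finset C} (hΓ : P.IsFamily Γ) {γ : C} (h : P.kfun Λ Γ γ ≠ 0) :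
    P.transOff Λ Γ (jmap Γ γ) = P.kfun Λ Γ γ ∧ P.IsFamily (jmap Γ γ) ∧
      jmap Γ γ ≠ Γ := by
  by_cases hγ : γ ∈ Γ
  · have hj : jmap Γ γ = Γ.erase γ := if_pos hγ
    have hk : P.kfun Λ Γ γ = P.zClique Λ γ / m := by
      rw [kfun, if_neg (fun hc => hc.1 hγ), if_pos hγ]
    refine ⟨?_, ?_, ?_⟩
    · rw [hj, hk]; exact P.transOff_erase Λ hγ
    · rw [hj]; exact P.isFamily_subset hΓ (Finset.erase_subset γ Γ)
    · rw [hj]; exact fun hc => (Finset.erase_eq_self.1 hc) hγ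
  · have hj : jmap Γ γ = insert γ Γ := if_neg hγ
    have hf : P.IsFamily (insert γ Γ) := by
      by_contra hf
      apply h
      rw [kfun, if_neg (fun hc => hf hc.2), if_neg hγ]
    have hk : P.kfun Λ Γ γ = P.w γ * P.zClique Λ γ / m := by
      rw [kfun, if_pos ⟨hγ, hf⟩]
    refine ⟨?_, ?_, ?_⟩
    · rw [hj, hk]; exact P.transOff_insert Λ hγ hf
    · rw [hj]; exact hf
    · rw [hj]; exact fun hc => hγ (Finset.insert_eq_self.1 hc)

lemma transOff_ne_zero {Γ Γ' : Finset C} (h : P.transOff Λ Γ Γ' ≠ 0) :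
    ∃ γ : C, jmap Γ γ = Γ' ∧ P.transOff Λ Γ Γ' = P.kfun Λ Γ γ := by
  by_cases h1 : ∃ γ : C, γ ∉ Γ ∧ Γ' = insert γ Γ
  · obtain ⟨γ, hγ, rfl⟩ := h1
    by_cases hf : P.IsFamily (insert γ Γ)
    · refine ⟨γ, if_neg hγ, ?_⟩
      rw [P.transOff_insert Λ hγ hf, kfun, if_pos ⟨hγ, hf⟩]
    · exact absurd (P.transOff_insert_notFam Λ hγ hf) h
  · by_cases h2 : ∃ γ : C, γ ∈ Γ ∧ Γ' = Γ.erase γ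
    · obtain ⟨γ, hγ, rfl⟩ := h2
      refine ⟨γ, if_pos hγ, ?_⟩
      rw [P.transOff_erase Λ hγ, kfun, if_neg (fun hc => hc.1 hγ), if_pos hγ]
    · exact absurd (P.transOff_eq_zero Λ (not_exists.1 h1) (not_exists.1 h2)) h

lemma Z_ge_one_add (B : Set C) :
    1 + (∑' γ : B, ENNReal.ofReal (P.w γ)) ≤ P.Z B := by
  set T := {Γ' : Finset C // P.IsFamily Γ' ∧ ↑Γ' ⊆ B} with hT
  set e0 : T := ⟨∅, P.isFamily_empty, by simp⟩ with he0
  set f : T → ℝ≥0∞ := fun x => ∏ γ ∈ x.1, ENNReal.ofReal (P.w γ) with hf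
  have hfe0 : f e0 = 1 := by rw [hf, he0]; simp
  have hsplit : P.Z B = 1 + ∑' x : T,
      @ite ℝ≥0∞ (x = e0) (Classical.propDecidable _) 0 (f x) := by
    rw [Z, ← hfe0]
    exact ENNReal.tsum_eq_add_tsum_ite e0
  rw [hsplit]
  refine add_le_add_right ?_ 1
  have hinj : Function.Injective (fun γ : B =>
      (⟨{γ.1}, P.isFamily_singleton γ.1, by simpa using γ.2⟩ : T)) := by
    intro a b hab
    have h2 := congrArg Subtype.val hab
    simp only at h2
    exact Subtype.ext (Finset.singleton_injective h2)
  have hne : ∀ γ : B,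
      (⟨{γ.1}, P.isFamily_singleton γ.1, by simpa using γ.2⟩ : T) ≠ e0 := by
    intro γ hcon
    have h2 := congrArg Subtype.val hcon
    simp only [he0] at h2
    exact Finset.singleton_ne_empty γ.1 h2
  have hcomp := ENNReal.tsum_comp_le_tsum_of_injective hinj
    (fun x : T => @ite ℝ≥0∞ (x = e0) (Classical.propDecidable _) 0 (f x))
  refine le_trans (le_of_eq (tsum_congr fun γ => ?_)) hcomp
  rw [if_neg (hne γ), hf]
  simp

lemma tsum_ofReal_kfun_lt_one (hm : 0 < m)
    (hclique : ∀ i, P.IsClique (Λ i)) {Γ : Finset C} (hΓ : P.IsFamily Γ) :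
    ∑' γ : C, ENNReal.ofReal (P.kfun Λ Γ γ) < 1 := by
  have hofz : ∀ γ : C, ENNReal.ofReal (P.zClique Λ γ)
      = ∑ i : Fin m, if γ ∈ Λ i then (P.Z (Λ i))⁻¹ else 0 := by
    intro γ
    have hnn : ∀ i ∈ (Finset.univ : Finset (Fin m)),
        (0:ℝ) ≤ if γ ∈ Λ i then ((P.Z (Λ i)).toReal)⁻¹ else 0 := by
      intro i _
      split_ifs
      · exact inv_nonneg.2 ENNReal.toReal_nonneg
      · exact le_rfl
    rw [zClique, ENNReal.ofReal_sum_of_nonneg hnn]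
    refine Finset.sum_congr rfl fun i _ => ?_
    split_ifs with h
    · by_cases hZ : P.Z (Λ i) = ⊤
      · rw [hZ]; simp
      · have h1 : (1 : ℝ) ≤ (P.Z (Λ i)).toReal := by
          rw [← ENNReal.toReal_one]
          exact ENNReal.toReal_mono hZ (P.one_le_Z (Λ i))
        rw [ENNReal.ofReal_inv_of_pos (by linarith), ENNReal.ofReal_toReal hZ]
    · exact ENNReal.ofReal_zero
  have hof : ∀ γ : C, ENNReal.ofReal (P.kfun Λ Γ γ)
      = (∑ i : Fin m, if γ ∈ Λ i then (P.Z (Λ i))⁻¹ * ENNReal.ofReal (P.cfun Γ γ) else 0)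
        / m := by
    intro γ
    rw [kfun_eq_cfun, ENNReal.ofReal_div_of_pos (by exact_mod_cast hm),
      ENNReal.ofReal_mul (P.cfun_nonneg Γ γ), hofz, ENNReal.ofReal_natCast,
      Finset.mul_sum]
    congr 1
    refine Finset.sum_congr rfl fun i _ => ?_
    split_ifs
    · rw [mul_comm]
    · rw [mul_zero]
  have key : ∀ i : Fin m,
      (∑' γ : C, if γ ∈ Λ i then (P.Z (Λ i))⁻¹ * ENNReal.ofReal (P.cfun Γ γ) else 0)
        < 1 := by
    intro i
    have hrw : (∑' γ : C, if γ ∈ Λ i then (P.Z (Λ i))⁻¹ * ENNReal.ofReal (P.cfun Γ γ)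
        else 0)
        = (P.Z (Λ i))⁻¹ * ∑' γ : C, (if γ ∈ Λ i then ENNReal.ofReal (P.cfun Γ γ) else 0)
        := by
      rw [← ENNReal.tsum_mul_left]
      refine tsum_congr fun γ => ?_
      split_ifs
      · rfl
      · rw [mul_zero]
    rw [hrw]
    by_cases hZtop : P.Z (Λ i) = ⊤
    · rw [hZtop]; simp
    have hZ0 : P.Z (Λ i) ≠ 0 := by
      intro hc'
      have h1 := P.one_le_Z (Λ i)
      rw [hc'] at h1
      exact absurd h1 (by simp)
    by_cases hγ₀ : ∃ γ₀, γ₀ ∈ Γ ∧ γ₀ ∈ Λ i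
    · obtain ⟨γ₀, hγ₀Γ, hγ₀Λ⟩ := hγ₀
      have hzero : ∀ γ : C, γ ≠ γ₀ →
          (if γ ∈ Λ i then ENNReal.ofReal (P.cfun Γ γ) else 0) = 0 := by
        intro γ hγ
        split_ifs with hmem
        · have hn1 : ¬(γ ∉ Γ ∧ P.IsFamily (insert γ Γ)) := by
            rintro ⟨-, hfam⟩
            exact hfam γ (Finset.mem_insert_self γ Γ) γ₀
              (Finset.mem_insert_of_mem hγ₀Γ) hγ (hclique i γ hmem γ₀ hγ₀Λ)
          have hn2 : γ ∉ Γ := fun hγΓ =>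
            hΓ γ hγΓ γ₀ hγ₀Γ hγ (hclique i γ hmem γ₀ hγ₀Λ)
          rw [cfun, if_neg hn1, if_neg hn2, ENNReal.ofReal_zero]
        · rfl
      have hVle : (∑' γ : C, (if γ ∈ Λ i then ENNReal.ofReal (P.cfun Γ γ) else 0)) ≤ 1
          := by
        rw [tsum_eq_single γ₀ hzero, if_pos hγ₀Λ, cfun,
          if_neg (fun hc => hc.1 hγ₀Γ), if_pos hγ₀Γ]
        simp
      have hZ1 : 1 < P.Z (Λ i) := by
        have hpair := ENNReal.sum_le_tsum
          (f := fun Γ' : {Γ' : Finset C // P.IsFamily Γ' ∧ ↑Γ' ⊆ Λ i} =>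
            ∏ γ ∈ Γ'.1, ENNReal.ofReal (P.w γ))
          ({⟨∅, P.isFamily_empty, by simp⟩,
            ⟨{γ₀}, P.isFamily_singleton γ₀, by simpa using hγ₀Λ⟩} :
              Finset {Γ' : Finset C // P.IsFamily Γ' ∧ ↑Γ' ⊆ Λ i})
        rw [Finset.sum_pair (by
          intro hcon
          have h2 := congrArg Subtype.val hcon
          exact Finset.singleton_ne_empty γ₀ h2.symm)] at hpair
        simp only [Finset.prod_empty, Finset.prod_singleton] at hpair
        calc (1 : ℝ≥0∞) < 1 + ENNReal.ofReal (P.w γ₀) :=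
              ENNReal.lt_add_right ENNReal.one_ne_top
                (ENNReal.ofReal_pos.2 (P.w_pos γ₀)).ne'
          _ ≤ P.Z (Λ i) := hpair
      calc (P.Z (Λ i))⁻¹ * (∑' γ : C, (if γ ∈ Λ i then ENNReal.ofReal (P.cfun Γ γ)
              else 0))
          ≤ (P.Z (Λ i))⁻¹ * 1 := mul_le_mul_right hVle _
        _ = (P.Z (Λ i))⁻¹ := mul_one _
        _ < 1 := ENNReal.inv_lt_one.2 hZ1
    · push_neg at hγ₀
      have hVW : (∑' γ : C, (if γ ∈ Λ i then ENNReal.ofReal (P.cfun Γ γ) else 0))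
          ≤ ∑' γ : (Λ i : Set C), ENNReal.ofReal (P.w γ) := by
        have h1 : (∑' γ : C, (if γ ∈ Λ i then ENNReal.ofReal (P.cfun Γ γ) else 0))
            = ∑' γ : C, Set.indicator (Λ i)
              (fun γ => ENNReal.ofReal (P.cfun Γ γ)) γ := by
          refine tsum_congr fun γ => ?_
          rw [Set.indicator_apply]
        rw [h1, ← tsum_subtype]
        refine Summable.tsum_le_tsum (fun γ => ?_) ENNReal.summable ENNReal.summable
        refine ENNReal.ofReal_le_ofReal ?_
        rw [cfun]
        split_ifs with h' h''
        · exact le_rfl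
        · exact absurd γ.2 (hγ₀ γ h'')
        · exact (P.w_pos γ).le
      have hZge : 1 + (∑' γ : (Λ i : Set C), ENNReal.ofReal (P.w γ)) ≤ P.Z (Λ i) :=
        P.Z_ge_one_add (Λ i)
      have hVZ : (∑' γ : C, (if γ ∈ Λ i then ENNReal.ofReal (P.cfun Γ γ) else 0))
          ≤ P.Z (Λ i) - 1 :=
        (ENNReal.cancel_of_ne ENNReal.one_ne_top).le_tsub_of_add_le_left
          (le_trans (add_le_add_right hVW 1) hZge)
      have hfin : P.Z (Λ i) - 1 < P.Z (Λ i) := ENNReal.sub_lt_self hZtop hZ0 one_ne_zero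
      calc (P.Z (Λ i))⁻¹ * (∑' γ : C, (if γ ∈ Λ i then ENNReal.ofReal (P.cfun Γ γ)
              else 0))
          ≤ (P.Z (Λ i))⁻¹ * (P.Z (Λ i) - 1) := mul_le_mul_right hVZ _
        _ < (P.Z (Λ i))⁻¹ * P.Z (Λ i) :=
            ENNReal.mul_lt_mul_right (ENNReal.inv_ne_zero.2 hZtop)
              (ENNReal.inv_ne_top.2 hZ0) hfin
        _ = 1 := ENNReal.inv_mul_cancel hZ0 hZtop
  have hswap : ∑' γ : C, ENNReal.ofReal (P.kfun Λ Γ γ)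
      = (∑ i : Fin m, ∑' γ : C,
          if γ ∈ Λ i then (P.Z (Λ i))⁻¹ * ENNReal.ofReal (P.cfun Γ γ) else 0) / m := by
    rw [tsum_congr hof]
    simp only [div_eq_mul_inv]
    rw [ENNReal.tsum_mul_right]
    congr 1
    rw [tsum_congr (fun γ => (tsum_fintype (L := SummationFilter.unconditional (Fin m)) (fun i : Fin m =>
      if γ ∈ Λ i then (P.Z (Λ i))⁻¹ * ENNReal.ofReal (P.cfun Γ γ) else 0)).symm),
      ENNReal.tsum_comm]
    exact tsum_fintype _
  rw [hswap]
  have hsum : (∑ i : Fin m, ∑' γ : C,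
      if γ ∈ Λ i then (P.Z (Λ i))⁻¹ * ENNReal.ofReal (P.cfun Γ γ) else 0) < m := by
    have hne : (Finset.univ : Finset (Fin m)).Nonempty := ⟨⟨0, hm⟩, Finset.mem_univ _⟩
    have h := ENNReal.sum_lt_sum_of_nonempty hne (fun i _ => key i)
    simpa using h
  rw [ENNReal.div_lt_iff (Or.inl (by exact_mod_cast hm.ne'))
    (Or.inl (ENNReal.natCast_ne_top m))]
  rw [one_mul]
  exact hsum

lemma offdiag_sum (hm : 0 < m) (hclique : ∀ i, P.IsClique (Λ i)) {Γ : Finset C}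
    (hΓ : P.IsFamily Γ) :
    Summable (fun x : {Γ'' : Finset C // P.IsFamily Γ'' ∧ Γ'' ≠ Γ} =>
      P.transOff Λ Γ ↑x) ∧
    0 ≤ (∑' x : {Γ'' : Finset C // P.IsFamily Γ'' ∧ Γ'' ≠ Γ}, P.transOff Λ Γ ↑x) ∧
    (∑' x : {Γ'' : Finset C // P.IsFamily Γ'' ∧ Γ'' ≠ Γ}, P.transOff Λ Γ ↑x) < 1 := by
  set g : C → ℝ≥0∞ := fun γ => ENNReal.ofReal (P.kfun Λ Γ γ) with hg
  have hk0 : ∀ x : Function.support g, P.kfun Λ Γ x.1 ≠ 0 := by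
    intro x h0
    apply x.2
    simp only [hg, h0, ENNReal.ofReal_zero]
  have hbij : (∑' x : {Γ'' : Finset C // P.IsFamily Γ'' ∧ Γ'' ≠ Γ},
      ENNReal.ofReal (P.transOff Λ Γ ↑x)) = ∑' γ : C, g γ := by
    refine tsum_eq_tsum_of_ne_zero_bij
      (fun x => ⟨jmap Γ x.1, (P.kfun_spec Λ hΓ (hk0 x)).2.1,
        (P.kfun_spec Λ hΓ (hk0 x)).2.2⟩) ?_ ?_ ?_
    · intro a b hab
      have h2 := congrArg Subtype.val hab
      simp only at h2
      exact Subtype.ext (jmap_injective Γ h2)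
    · intro x hx
      have htne : P.transOff Λ Γ ↑x ≠ 0 := by
        intro h0
        apply hx
        simp only [h0, ENNReal.ofReal_zero]
      obtain ⟨γ, hjγ, heq⟩ := P.transOff_ne_zero Λ htne
      have hkne : P.kfun Λ Γ γ ≠ 0 := fun h0 => htne (heq.trans h0)
      have hγsupp : γ ∈ Function.support g := by
        simp only [hg, Function.mem_support, ne_eq, ENNReal.ofReal_eq_zero, not_le]
        exact lt_of_le_of_ne (P.kfun_nonneg Λ Γ γ) (Ne.symm hkne)
      exact ⟨⟨γ, hγsupp⟩, Subtype.ext hjγ⟩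
    · intro x
      exact congrArg ENNReal.ofReal (P.kfun_spec Λ hΓ (hk0 x)).1
  have hlt : (∑' x : {Γ'' : Finset C // P.IsFamily Γ'' ∧ Γ'' ≠ Γ},
      ENNReal.ofReal (P.transOff Λ Γ ↑x)) < 1 := by
    rw [hbij]
    exact P.tsum_ofReal_kfun_lt_one Λ hm hclique hΓ
  have hne_top : (∑' x : {Γ'' : Finset C // P.IsFamily Γ'' ∧ Γ'' ≠ Γ},
      ENNReal.ofReal (P.transOff Λ Γ ↑x)) ≠ ⊤ := hlt.ne_top
  have hsummable : Summable (fun x : {Γ'' : Finset C // P.IsFamily Γ'' ∧ Γ'' ≠ Γ} =>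
      P.transOff Λ Γ ↑x) := by
    have h1 := ENNReal.summable_toReal hne_top
    exact h1.congr fun x => ENNReal.toReal_ofReal (P.transOff_nonneg Λ Γ ↑x)
  have hval : (∑' x : {Γ'' : Finset C // P.IsFamily Γ'' ∧ Γ'' ≠ Γ}, P.transOff Λ Γ ↑x)
      = (∑' x : {Γ'' : Finset C // P.IsFamily Γ'' ∧ Γ'' ≠ Γ},
          ENNReal.ofReal (P.transOff Λ Γ ↑x)).toReal := by
    rw [ENNReal.tsum_toReal_eq (fun x => ENNReal.ofReal_ne_top)]
    exact tsum_congr fun x => (ENNReal.toReal_ofReal (P.transOff_nonneg Λ Γ ↑x)).symm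
  refine ⟨hsummable, tsum_nonneg fun x => P.transOff_nonneg Λ Γ ↑x, ?_⟩
  rw [hval, ← ENNReal.toReal_one]
  exact (ENNReal.toReal_lt_toReal hne_top ENNReal.one_ne_top).2 hlt

lemma trans_row_sum (hm : 0 < m) (hclique : ∀ i, P.IsClique (Λ i)) {Γ : Finset C}
    (hΓ : P.IsFamily Γ) :
    ∑' Γ' : {Γ' : Finset C // P.IsFamily Γ'}, P.trans Λ Γ ↑Γ' = 1 := by
  obtain ⟨hsum, hnn, hlt⟩ := P.offdiag_sum Λ hm hclique hΓ
  set S : ℝ := ∑' x : {Γ'' : Finset C // P.IsFamily Γ'' ∧ Γ'' ≠ Γ}, P.transOff Λ Γ ↑x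
    with hS
  set e0 : {Γ' : Finset C // P.IsFamily Γ'} := ⟨Γ, hΓ⟩ with he0
  set ι : {Γ'' : Finset C // P.IsFamily Γ'' ∧ Γ'' ≠ Γ} → {Γ' : Finset C // P.IsFamily Γ'}
    := fun x => ⟨x.1, x.2.1⟩ with hι
  have hιinj : Function.Injective ι := by
    intro a b hab
    have h2 := congrArg Subtype.val hab
    simp only [hι] at h2
    exact Subtype.ext h2
  set f2 : {Γ' : Finset C // P.IsFamily Γ'} → ℝ :=
    fun x => if (x : Finset C) = Γ then 0 else P.transOff Λ Γ ↑x with hf2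
  have hvanish : ∀ x ∉ Set.range ι, f2 x = 0 := by
    intro x hx
    have hxΓ : (x : Finset C) = Γ := by
      by_contra hne
      exact hx ⟨⟨x.1, x.2, hne⟩, rfl⟩
    simp only [hf2]
    rw [if_pos hxΓ]
  have hcompeq : ∀ x : {Γ'' : Finset C // P.IsFamily Γ'' ∧ Γ'' ≠ Γ},
      P.transOff Λ Γ ↑x = f2 (ι x) := by
    intro x
    simp only [hf2, hι]
    rw [if_neg x.2.2]
  have hf2sum : Summable f2 :=
    (hιinj.summable_iff hvanish).1 ((hsum.congr hcompeq) : Summable fun x => f2 (ι x))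
  have hf2tsum : ∑' x, f2 x = S := by
    rw [← hιinj.tsum_eq (Function.support_subset_iff'.2 hvanish)]
    exact (tsum_congr hcompeq).symm
  have hg1 : ∀ x : {Γ' : Finset C // P.IsFamily Γ'},
      P.trans Λ Γ ↑x = (if x = e0 then 1 - S else 0) + f2 x := by
    intro x
    by_cases hx : (x : Finset C) = Γ
    · have hxe : x = e0 := Subtype.ext hx
      have h2 : f2 x = 0 := by simp only [hf2]; rw [if_pos hx]
      have h1 : (if x = e0 then 1 - S else 0) = 1 - S := if_pos hxe
      have h3 : P.trans Λ Γ ↑x = 1 - S := by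
        rw [PolymerModel.trans, if_pos hx]
      rw [h1, h2, h3, add_zero]
    · have hxe : x ≠ e0 := fun he => hx (by rw [he])
      have h2 : f2 x = P.transOff Λ Γ ↑x := by simp only [hf2]; rw [if_neg hx]
      have h1 : (if x = e0 then 1 - S else 0) = 0 := if_neg hxe
      have h3 : P.trans Λ Γ ↑x = P.transOff Λ Γ ↑x := by
        rw [PolymerModel.trans, if_neg hx]
      rw [h1, h2, h3, zero_add]
  have hsummable1 : Summable (fun x : {Γ' : Finset C // P.IsFamily Γ'} =>
      if x = e0 then 1 - S else 0) := by
    refine summable_of_ne_finset_zero (s := {e0}) ?_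
    intro b hb
    rw [if_neg (Finset.notMem_singleton.1 hb)]
  calc ∑' x : {Γ' : Finset C // P.IsFamily Γ'}, P.trans Λ Γ ↑x
      = ∑' x : {Γ' : Finset C // P.IsFamily Γ'},
          ((if x = e0 then 1 - S else 0) + f2 x) := tsum_congr hg1
    _ = (∑' x : {Γ' : Finset C // P.IsFamily Γ'}, if x = e0 then 1 - S else 0)
        + ∑' x, f2 x := Summable.tsum_add hsummable1 hf2sum
    _ = (1 - S) + S := by
        rw [hf2tsum, tsum_eq_single e0 (fun b hb => if_neg hb), if_pos rfl]
    _ = 1 := by ring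

lemma gibbs_toReal_insert {Γ : Finset C} {γ : C} (hγ : γ ∉ Γ)
    (hfam : P.IsFamily (insert γ Γ)) :
    (P.gibbs Set.univ (insert γ Γ)).toReal = P.w γ * (P.gibbs Set.univ Γ).toReal := by
  have hΓ : P.IsFamily Γ := P.isFamily_subset hfam (Finset.subset_insert γ Γ)
  rw [gibbs, gibbs, if_pos ⟨hfam, Set.subset_univ _⟩, if_pos ⟨hΓ, Set.subset_univ _⟩,
    Finset.prod_insert hγ, ENNReal.toReal_div, ENNReal.toReal_div, ENNReal.toReal_mul,
    ENNReal.toReal_ofReal (P.w_pos γ).le]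
  ring

lemma detailed_balance {Γ Γ' : Finset C} (hΓ : P.IsFamily Γ) (hΓ' : P.IsFamily Γ') :
    (P.gibbs Set.univ Γ).toReal * P.trans Λ Γ Γ'
      = (P.gibbs Set.univ Γ').toReal * P.trans Λ Γ' Γ := by
  by_cases he : Γ' = Γ
  · subst he; rfl
  have he' : ¬(Γ = Γ') := fun h => he h.symm
  rw [PolymerModel.trans, if_neg he, PolymerModel.trans, if_neg he']
  by_cases h1 : ∃ γ : C, γ ∉ Γ ∧ Γ' = insert γ Γ
  · obtain ⟨γ, hγ, rfl⟩ := h1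
    have ht1 : P.transOff Λ Γ (insert γ Γ) = P.w γ * P.zClique Λ γ / m :=
      P.transOff_insert Λ hγ hΓ'
    have ht2 : P.transOff Λ (insert γ Γ) Γ = P.zClique Λ γ / m := by
      have h := P.transOff_erase Λ (Γ := insert γ Γ) (γ₀ := γ)
        (Finset.mem_insert_self γ Γ)
      rwa [Finset.erase_insert hγ] at h
    rw [ht1, ht2, P.gibbs_toReal_insert hγ hΓ']
    ring
  by_cases h2 : ∃ γ : C, γ ∈ Γ ∧ Γ' = Γ.erase γ
  · obtain ⟨γ, hγ, rfl⟩ := h2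
    have hγ' : γ ∉ Γ.erase γ := Finset.notMem_erase γ Γ
    have hins : insert γ (Γ.erase γ) = Γ := Finset.insert_erase hγ
    have ht1 : P.transOff Λ Γ (Γ.erase γ) = P.zClique Λ γ / m := P.transOff_erase Λ hγ
    have ht2 : P.transOff Λ (Γ.erase γ) Γ = P.w γ * P.zClique Λ γ / m := by
      have h := P.transOff_insert Λ hγ' (hins.symm ▸ hΓ)
      rwa [hins] at h
    have hg : (P.gibbs Set.univ Γ).toReal
        = P.w γ * (P.gibbs Set.univ (Γ.erase γ)).toReal := by
      have h := P.gibbs_toReal_insert hγ' (hins.symm ▸ hΓ)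
      rwa [hins] at h
    rw [ht1, ht2, hg]
    ring
  · have hz1 : P.transOff Λ Γ Γ' = 0 :=
      P.transOff_eq_zero Λ (fun γ hc => h1 ⟨γ, hc⟩) (fun γ hc => h2 ⟨γ, hc⟩)
    have hz2 : P.transOff Λ Γ' Γ = 0 := by
      refine P.transOff_eq_zero Λ ?_ ?_
      · rintro γ ⟨hn, heq⟩
        refine h2 ⟨γ, ?_, ?_⟩
        · rw [heq]; exact Finset.mem_insert_self γ Γ'
        · rw [heq, Finset.erase_insert hn]
      · rintro γ ⟨hmem, heq⟩
        refine h1 ⟨γ, ?_, ?_⟩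
        · rw [heq]; exact Finset.notMem_erase γ Γ'
        · rw [heq, Finset.insert_erase hmem]
    rw [hz1, hz2, mul_zero, mul_zero]

end PolymerModel

/-- The clique dynamics transition matrix is a stochastic matrix with
positive self-loops on the polymer families, it satisfies detailed balance with respect
to the Gibbs distribution `μ`, and `μ` is a stationary distribution for it. -/
theorem clique_dynamics_stochastic_reversible_stationary {C : Type*} [Countable C]
    [Nonempty C] (P : PolymerModel C) (hZfin : P.Z Set.univ ≠ ⊤)
    {m : ℕ} (hm : 0 < m) (Λ : Fin m → Set C)
    (hclique : ∀ i, P.IsClique (Λ i)) (hcover : (⋃ i, Λ i) = Set.univ) :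
    ((∀ Γ Γ' : Finset C, P.IsFamily Γ → P.IsFamily Γ' → 0 ≤ P.trans Λ Γ Γ') ∧
      (∀ Γ : Finset C, P.IsFamily Γ →
        ∑' Γ' : {Γ' : Finset C // P.IsFamily Γ'}, P.trans Λ Γ ↑Γ' = 1) ∧
      (∀ Γ : Finset C, P.IsFamily Γ → 0 < P.trans Λ Γ Γ)) ∧
    (∀ Γ Γ' : Finset C, P.IsFamily Γ → P.IsFamily Γ' →
      (P.gibbs Set.univ Γ).toReal * P.trans Λ Γ Γ'
        = (P.gibbs Set.univ Γ').toReal * P.trans Λ Γ' Γ) ∧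
    (∀ Γ' : Finset C, P.IsFamily Γ' →
      ∑' Γ : {Γ : Finset C // P.IsFamily Γ},
          (P.gibbs Set.univ ↑Γ).toReal * P.trans Λ ↑Γ Γ'
        = (P.gibbs Set.univ Γ').toReal) := by
  have hdb : ∀ Γ Γ' : Finset C, P.IsFamily Γ → P.IsFamily Γ' →
      (P.gibbs Set.univ Γ).toReal * P.trans Λ Γ Γ'
        = (P.gibbs Set.univ Γ').toReal * P.trans Λ Γ' Γ :=
    fun Γ Γ' hΓ hΓ' => P.detailed_balance Λ hΓ hΓ'
  have hrow : ∀ Γ : Finset C, P.IsFamily Γ →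
      ∑' Γ' : {Γ' : Finset C // P.IsFamily Γ'}, P.trans Λ Γ ↑Γ' = 1 :=
    fun Γ hΓ => P.trans_row_sum Λ hm hclique hΓ
  refine ⟨⟨?_, hrow, ?_⟩, hdb, ?_⟩
  · intro Γ Γ' hΓ hΓ'
    rw [PolymerModel.trans]
    split_ifs with h
    · obtain ⟨-, -, hlt⟩ := P.offdiag_sum Λ hm hclique hΓ
      linarith
    · exact P.transOff_nonneg Λ Γ Γ'
  · intro Γ hΓ
    rw [PolymerModel.trans, if_pos rfl]
    obtain ⟨-, -, hlt⟩ := P.offdiag_sum Λ hm hclique hΓ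
    linarith
  · intro Γ' hΓ'
    calc ∑' Γ : {Γ : Finset C // P.IsFamily Γ},
          (P.gibbs Set.univ ↑Γ).toReal * P.trans Λ ↑Γ Γ'
        = ∑' Γ : {Γ : Finset C // P.IsFamily Γ},
            (P.gibbs Set.univ Γ').toReal * P.trans Λ Γ' ↑Γ :=
          tsum_congr fun x => hdb x.1 Γ' x.2 hΓ'
      _ = (P.gibbs Set.univ Γ').toReal
          * ∑' Γ : {Γ : Finset C // P.IsFamily Γ}, P.trans Λ Γ' ↑Γ := tsum_mul_left
      _ = (P.gibbs Set.univ Γ').toReal := by rw [hrow Γ' hΓ', mul_one]
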